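/- Let κ : ℝ^d × ℝ^d → ℝ be a symmetric kernel that is transparent with constant C ≥ 0 (each slice s ↦ κ(s,t) is twice continuously differentiable with vanishing derivative at s = t and second derivative of norm at most C), and let φ : ℝ^d → H be a feature map for κ into a real inner product space H. Then for all u, v ∈ ℝ^d, ‖φ(u) − φ(v)‖ ≤ √C · ‖u − v‖; that is, the feature map of a transparent kernel is Lipschitz with constant √C. -/

import Mathlib

open RealInnerProductSpace

open intervalIntegral in
lemma key_taylor {E : Type*} [NormedAddCommGroup E] [NormedSpace ℝ E]
    (f : E → ℝ) (hf : ContDiff ℝ 2 f) (a : E) (h0 : fderiv ℝ f a = 0)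
    (C : ℝ) (hC : 0 ≤ C) (hb : ∀ x, ‖iteratedFDeriv ℝ 2 f x‖ ≤ C) (b : E) :
    |f b - f a| ≤ C / 2 * ‖b - a‖ ^ 2 := by
  have hdf : Differentiable ℝ f := hf.differentiable (by norm_num)
  have hfd1 : ContDiff ℝ 1 (fderiv ℝ f) := hf.fderiv_right (m := 1) (by norm_num)
  have hdf2 : Differentiable ℝ (fderiv ℝ f) := hfd1.differentiable (by norm_num)
  have hlip : LipschitzWith C.toNNReal (fderiv ℝ f) := by
    apply lipschitzWith_of_nnnorm_fderiv_le (fun x => (hdf2 x))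
    intro x
    rw [← NNReal.coe_le_coe]
    calc (‖fderiv ℝ (fderiv ℝ f) x‖₊ : ℝ) = ‖fderiv ℝ (fderiv ℝ f) x‖ := rfl
      _ = ‖iteratedFDeriv ℝ 0 (fderiv ℝ (fderiv ℝ f)) x‖ := (norm_iteratedFDeriv_zero (f := fderiv ℝ (fderiv ℝ f)) (x := x)).symm
      _ = ‖iteratedFDeriv ℝ 1 (fderiv ℝ f) x‖ := norm_iteratedFDeriv_fderiv
      _ = ‖iteratedFDeriv ℝ 2 f x‖ := norm_iteratedFDeriv_fderiv
      _ ≤ C := hb x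
      _ = C.toNNReal := (Real.coe_toNNReal C hC).symm
  have hnorm : ∀ x, ‖fderiv ℝ f x‖ ≤ C * ‖x - a‖ := by
    intro x
    calc ‖fderiv ℝ f x‖ = ‖fderiv ℝ f x - fderiv ℝ f a‖ := by rw [h0, sub_zero]
      _ ≤ C.toNNReal * ‖x - a‖ := hlip.norm_sub_le x a
      _ = C * ‖x - a‖ := by rw [Real.coe_toNNReal C hC]
  set g : ℝ → ℝ := fun θ => fderiv ℝ f (a + θ • (b - a)) (b - a) with hg
  have hFd : ∀ θ : ℝ, HasDerivAt (fun θ : ℝ => f (a + θ • (b - a))) (g θ) θ := by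
    intro θ
    have h1 : HasDerivAt (fun θ : ℝ => a + θ • (b - a)) (b - a) θ := by
      simpa using ((hasDerivAt_id θ).smul_const (b - a)).const_add a
    exact ((hdf _).hasFDerivAt.comp_hasDerivAt θ h1)
  have hgc : Continuous g := by
    apply Continuous.clm_apply _ continuous_const
    exact hfd1.continuous.comp (by continuity)
  have heq : f b - f a = ∫ θ in (0:ℝ)..1, g θ := by
    have := intervalIntegral.integral_eq_sub_of_hasDerivAt (fun θ _ => hFd θ)
      (hgc.intervalIntegrable 0 1)
    simpa using this.symm
  have hbound : ∀ θ ∈ Set.uIcc (0:ℝ) 1, ‖g θ‖ ≤ C * ‖b - a‖ ^ 2 * θ := by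
    intro θ hθ
    rw [Set.uIcc_of_le (by norm_num)] at hθ
    calc ‖g θ‖ ≤ ‖fderiv ℝ f (a + θ • (b - a))‖ * ‖b - a‖ :=
          (fderiv ℝ f (a + θ • (b - a))).le_opNorm _
      _ ≤ (C * ‖(a + θ • (b - a)) - a‖) * ‖b - a‖ := by
          exact mul_le_mul_of_nonneg_right (hnorm _) (norm_nonneg _)
      _ = C * ‖b - a‖ ^ 2 * θ := by
          rw [add_sub_cancel_left, norm_smul, Real.norm_eq_abs, abs_of_nonneg hθ.1]
          ring
  have hint : (∫ θ in (0:ℝ)..1, C * ‖b - a‖ ^ 2 * θ) = C / 2 * ‖b - a‖ ^ 2 := by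
    rw [intervalIntegral.integral_const_mul, integral_id]; ring
  have hae : ∀ᵐ θ ∂(MeasureTheory.volume.restrict (Set.uIoc (0:ℝ) 1)),
      ‖g θ‖ ≤ C * ‖b - a‖ ^ 2 * θ := by
    filter_upwards [MeasureTheory.ae_restrict_mem measurableSet_uIoc] with θ hθ
    exact hbound θ (Set.uIoc_subset_uIcc hθ)
  have hintg : IntervalIntegrable (fun θ : ℝ => C * ‖b - a‖ ^ 2 * θ)
      MeasureTheory.volume 0 1 :=
    (continuous_const.mul continuous_id).intervalIntegrable 0 1
  calc |f b - f a| = ‖∫ θ in (0:ℝ)..1, g θ‖ := by rw [heq]; rfl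
    _ ≤ |∫ θ in (0:ℝ)..1, C * ‖b - a‖ ^ 2 * θ| :=
        intervalIntegral.norm_integral_le_abs_of_norm_le hae hintg
    _ = C / 2 * ‖b - a‖ ^ 2 := by
        rw [hint, abs_of_nonneg (by positivity)]

/-- The feature map of a symmetric transparent kernel with second-derivative bound `C`
is Lipschitz with constant `√C`. -/
theorem transparent_kernel_feature_map_lipschitz
    {d : ℕ} (hd : 1 ≤ d)
    (κ : EuclideanSpace ℝ (Fin d) → EuclideanSpace ℝ (Fin d) → ℝ)
    (hsymm : ∀ s t, κ s t = κ t s)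
    (C : ℝ) (hC : 0 ≤ C)
    (hsmooth : ∀ t, ContDiff ℝ 2 (fun s => κ s t))
    (hderiv : ∀ t, fderiv ℝ (fun s => κ s t) t = 0)
    (hbound : ∀ s t, ‖iteratedFDeriv ℝ 2 (fun s' => κ s' t) s‖ ≤ C)
    {H : Type*} [NormedAddCommGroup H] [InnerProductSpace ℝ H]
    (φ : EuclideanSpace ℝ (Fin d) → H)
    (hφ : ∀ s t, ⟪φ s, φ t⟫ = κ s t) :
    ∀ u v : EuclideanSpace ℝ (Fin d),
      ‖φ u - φ v‖ ≤ Real.sqrt C * ‖u - v‖ := by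
  intro u v
  have hsq : ‖φ u - φ v‖ ^ 2 = κ u u - 2 * κ u v + κ v v := by
    rw [norm_sub_sq_real, ← hφ u u, ← hφ u v, ← hφ v v,
      real_inner_self_eq_norm_sq, real_inner_self_eq_norm_sq]
  have h1 : |κ v u - κ u u| ≤ C / 2 * ‖v - u‖ ^ 2 :=
    key_taylor (fun s => κ s u) (hsmooth u) u (hderiv u) C hC (fun x => hbound x u) v
  have h2 : |κ u v - κ v v| ≤ C / 2 * ‖u - v‖ ^ 2 :=
    key_taylor (fun s => κ s v) (hsmooth v) v (hderiv v) C hC (fun x => hbound x v) u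
  have hle : ‖φ u - φ v‖ ^ 2 ≤ C * ‖u - v‖ ^ 2 := by
    rw [hsq]
    have e1 : κ u u - 2 * κ u v + κ v v = (κ u u - κ v u) + (κ v v - κ u v) := by
      rw [hsymm u v]; ring
    rw [e1]
    have := abs_le.1 h1
    have := abs_le.1 h2
    rw [norm_sub_rev v u] at h1
    have h1' := abs_le.1 h1
    have h2' := abs_le.1 h2
    nlinarith [h1'.1, h1'.2, h2'.1, h2'.2]
  calc ‖φ u - φ v‖ = Real.sqrt (‖φ u - φ v‖ ^ 2) := (Real.sqrt_sq (norm_nonneg _)).symm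
    _ ≤ Real.sqrt (C * ‖u - v‖ ^ 2) := Real.sqrt_le_sqrt hle
    _ = Real.sqrt C * ‖u - v‖ := by
        rw [Real.sqrt_mul hC, Real.sqrt_sq (norm_nonneg _)]
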